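/- arXiv:2502.02803 — 2 statements merged into one kernel-verified Lean document; each statement's English description precedes it below -/
import Mathlib

section
/- Let f : ℂ × ℂ × ℂ → ℂ be continuous on the unit 3-torus (the set of triples (z₁,z₂,z₃) with |z₁| = |z₂| = |z₃| = 1). Then the iterated limit lim_{n₂→∞} lim_{n₃→∞} ∫_0^1 f(e^{2πit}, e^{2πin₂t}, e^{2πin₃t}) dt exists and equals ∫_0^1 ∫_0^1 ∫_0^1 f(e^{2πit₁}, e^{2πit₂}, e^{2πit₃}) dt₁ dt₂ dt₃. Precisely: for every integer n₂ ≥ 1 the inner limit L(n₂) := lim_{n₃→∞} ∫_0^1 f(e^{2πit}, e^{2πin₂t}, e^{2πin₃t}) dt exists, and L(n₂) tends to the triple integral as n₂ → ∞. -/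
open Real Complex Filter MeasureTheory intervalIntegral

noncomputable section

namespace BL

def K : Set (ℂ × ℂ × ℂ) :=
  {p : ℂ × ℂ × ℂ | ‖p.1‖ = 1 ∧ ‖p.2.1‖ = 1 ∧ ‖p.2.2‖ = 1}

lemma K_eq : K = Metric.sphere (0:ℂ) 1 ×ˢ (Metric.sphere (0:ℂ) 1 ×ˢ Metric.sphere (0:ℂ) 1) := by
  ext p
  simp [K, Set.mem_prod, Complex.dist_eq]

instance : CompactSpace K :=
  isCompact_iff_compactSpace.mp (K_eq ▸
    ((isCompact_sphere _ _).prod ((isCompact_sphere _ _).prod (isCompact_sphere _ _))))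

/-- the exponential path -/
def e (t : ℝ) : ℂ := Complex.exp (2 * π * Complex.I * t)

lemma cont_e : Continuous e := by unfold e; fun_prop

lemma abs_e (t : ℝ) : ‖e t‖ = 1 := by
  rw [e, Complex.norm_exp]
  norm_num

def mk3 (t u v : ℝ) : K := ⟨(e t, e u, e v), abs_e t, abs_e u, abs_e v⟩

lemma cont_mk3 {X : Type*} [TopologicalSpace X] {a b c : X → ℝ}
    (ha : Continuous a) (hb : Continuous b) (hc : Continuous c) :
    Continuous fun x => mk3 (a x) (b x) (c x) :=
  Continuous.subtype_mk (((cont_e.comp ha).prodMk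
    ((cont_e.comp hb).prodMk (cont_e.comp hc)))) _

lemma ne_zero_of_mem {z : ℂ} (h : ‖z‖ = 1) : z ≠ 0 := by
  intro h0; rw [h0] at h; simp at h

/-- characters on the torus -/
def chi (m : ℤ × ℤ × ℤ) : C(K, ℂ) :=
  ⟨fun p => (p : ℂ × ℂ × ℂ).1 ^ m.1 * (p : ℂ × ℂ × ℂ).2.1 ^ m.2.1 *
      (p : ℂ × ℂ × ℂ).2.2 ^ m.2.2, by
    apply Continuous.mul
    apply Continuous.mul
    · exact ((continuous_fst.comp continuous_subtype_val).zpow₀ _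
        (fun p => Or.inl (ne_zero_of_mem p.2.1)))
    · exact (((continuous_fst.comp continuous_snd).comp continuous_subtype_val).zpow₀ _
        (fun p => Or.inl (ne_zero_of_mem p.2.2.1)))
    · exact (((continuous_snd.comp continuous_snd).comp continuous_subtype_val).zpow₀ _
        (fun p => Or.inl (ne_zero_of_mem p.2.2.2)))⟩

lemma chi_apply (m : ℤ × ℤ × ℤ) (p : K) :
    chi m p = (p : ℂ × ℂ × ℂ).1 ^ m.1 * (p : ℂ × ℂ × ℂ).2.1 ^ m.2.1 *
      (p : ℂ × ℂ × ℂ).2.2 ^ m.2.2 := rfl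

lemma chi_mul (m m' : ℤ × ℤ × ℤ) : chi m * chi m' = chi (m + m') := by
  ext p
  simp only [ContinuousMap.mul_apply, chi_apply, Prod.fst_add, Prod.snd_add]
  rw [zpow_add₀ (ne_zero_of_mem p.2.1), zpow_add₀ (ne_zero_of_mem p.2.2.1),
    zpow_add₀ (ne_zero_of_mem p.2.2.2)]
  ring

lemma chi_zero : chi 0 = 1 := by
  ext p; simp [chi_apply]

lemma chi_star (m : ℤ × ℤ × ℤ) : star (chi m) = chi (-m) := by
  ext p
  have h1 : ∀ z : ℂ, ‖z‖ = 1 → ∀ a : ℤ, (starRingEnd ℂ) (z ^ a) = z ^ (-a) := by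
    intro z hz a
    rw [map_zpow₀, ← RCLike.inv_eq_conj (by simpa using hz), inv_zpow, ← zpow_neg]
  simp only [ContinuousMap.star_apply, chi_apply, RCLike.star_def, map_mul,
    h1 _ p.2.1, h1 _ p.2.2.1, h1 _ p.2.2.2, Prod.fst_neg, Prod.snd_neg]

end BL

namespace BL

/-- span of characters -/
def V : Submodule ℂ C(K, ℂ) := Submodule.span ℂ (Set.range chi)

def A : StarSubalgebra ℂ C(K, ℂ) where
  carrier := V
  mul_mem' {g h} hg hh := by
    have h1 : g * h ∈ V * V := Submodule.mul_mem_mul hg hh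
    have h2 : V * V ≤ V := by
      rw [V, Submodule.span_mul_span]
      apply Submodule.span_le.mpr
      rintro x ⟨y, ⟨my, rfl⟩, z, ⟨mz, rfl⟩, rfl⟩
      show chi my * chi mz ∈ _
      rw [chi_mul]
      exact Submodule.subset_span ⟨my + mz, rfl⟩
    exact h2 h1
  add_mem' := V.add_mem
  one_mem' := by
    show (1 : C(K, ℂ)) ∈ V
    rw [← chi_zero]
    exact Submodule.subset_span ⟨0, rfl⟩
  zero_mem' := V.zero_mem
  algebraMap_mem' c := by
    show (algebraMap ℂ C(K, ℂ)) c ∈ V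
    have h0 : (algebraMap ℂ C(K, ℂ)) c = c • chi 0 := by
      rw [chi_zero, Algebra.algebraMap_eq_smul_one]
    rw [h0]
    exact V.smul_mem c (Submodule.subset_span ⟨0, rfl⟩)
  star_mem' {g} hg := by
    induction hg using Submodule.span_induction with
    | mem x hx =>
      obtain ⟨m, rfl⟩ := hx
      rw [chi_star]
      exact Submodule.subset_span ⟨-m, rfl⟩
    | zero => simpa using V.zero_mem
    | add x y _ _ hx hy => rw [star_add]; exact V.add_mem hx hy
    | smul c x _ hx => rw [star_smul]; exact V.smul_mem _ hx

lemma A_sep : A.SeparatesPoints := by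
  intro p q hpq
  have h : (p : ℂ × ℂ × ℂ) ≠ q := fun h => hpq (Subtype.ext h)
  have h1 : (p : ℂ × ℂ × ℂ).1 ≠ (q : ℂ × ℂ × ℂ).1 ∨
      (p : ℂ × ℂ × ℂ).2.1 ≠ (q : ℂ × ℂ × ℂ).2.1 ∨
      (p : ℂ × ℂ × ℂ).2.2 ≠ (q : ℂ × ℂ × ℂ).2.2 := by
    by_contra hc
    push_neg at hc
    exact h (Prod.ext hc.1 (Prod.ext hc.2.1 hc.2.2))
  rcases h1 with h1 | h1 | h1
  · refine ⟨⇑(chi (1, 0, 0)), ⟨chi (1, 0, 0), ?_, rfl⟩, by simpa [chi_apply] using h1⟩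
    exact Submodule.subset_span ⟨(1, 0, 0), rfl⟩
  · refine ⟨⇑(chi (0, 1, 0)), ⟨chi (0, 1, 0), ?_, rfl⟩, by simpa [chi_apply] using h1⟩
    exact Submodule.subset_span ⟨(0, 1, 0), rfl⟩
  · refine ⟨⇑(chi (0, 0, 1)), ⟨chi (0, 0, 1), ?_, rfl⟩, by simpa [chi_apply] using h1⟩
    exact Submodule.subset_span ⟨(0, 0, 1), rfl⟩

lemma V_dense : Dense (V : Set C(K, ℂ)) := by
  have h := ContinuousMap.starSubalgebra_topologicalClosure_eq_top_of_separatesPoints A A_sep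
  intro x
  have hx : x ∈ A.topologicalClosure := by rw [h]; trivial
  have h2 : x ∈ closure (A : Set C(K, ℂ)) := by
    rw [← StarSubalgebra.topologicalClosure_coe A]; exact hx
  exact h2

end BL

namespace BL

section functionals

/-- single integral along a path -/
def P1 (q : ℝ → K) (g : C(K, ℂ)) : ℂ := ∫ t in (0:ℝ)..1, g (q t)

def P2 (q : ℝ → ℝ → K) (g : C(K, ℂ)) : ℂ := ∫ t in (0:ℝ)..1, ∫ v in (0:ℝ)..1, g (q t v)

def P3 (q : ℝ → ℝ → ℝ → K) (g : C(K, ℂ)) : ℂ :=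
  ∫ t in (0:ℝ)..1, ∫ u in (0:ℝ)..1, ∫ v in (0:ℝ)..1, g (q t u v)

variable {q1 : ℝ → K} {q2 : ℝ → ℝ → K} {q3 : ℝ → ℝ → ℝ → K}

lemma contP2_inner (hq : Continuous fun p : ℝ × ℝ => q2 p.1 p.2) (g : C(K, ℂ)) :
    Continuous fun t => ∫ v in (0:ℝ)..1, g (q2 t v) := by
  apply intervalIntegral.continuous_parametric_intervalIntegral_of_continuous'
    (f := fun t v => g (q2 t v))
  exact g.continuous.comp hq

lemma contP3_inner (hq : Continuous fun p : ℝ × ℝ × ℝ => q3 p.1 p.2.1 p.2.2) (g : C(K, ℂ)) :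
    Continuous fun p : ℝ × ℝ => ∫ v in (0:ℝ)..1, g (q3 p.1 p.2 v) := by
  apply intervalIntegral.continuous_parametric_intervalIntegral_of_continuous'
    (f := fun (p : ℝ × ℝ) v => g (q3 p.1 p.2 v))
  have h' : Continuous fun a : (ℝ × ℝ) × ℝ => q3 a.1.1 a.1.2 a.2 :=
    hq.comp ((continuous_fst.fst).prodMk ((continuous_fst.snd).prodMk continuous_snd))
  exact g.continuous.comp h'

lemma contP3_inner2 (hq : Continuous fun p : ℝ × ℝ × ℝ => q3 p.1 p.2.1 p.2.2) (g : C(K, ℂ)) :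
    Continuous fun t => ∫ u in (0:ℝ)..1, ∫ v in (0:ℝ)..1, g (q3 t u v) := by
  apply intervalIntegral.continuous_parametric_intervalIntegral_of_continuous'
    (f := fun t u => ∫ v in (0:ℝ)..1, g (q3 t u v))
  exact (contP3_inner hq g).comp (by fun_prop : Continuous fun p : ℝ × ℝ => ((p.1, p.2) : ℝ × ℝ))

lemma P1_add (hq : Continuous q1) (g h : C(K, ℂ)) : P1 q1 (g + h) = P1 q1 g + P1 q1 h := by
  unfold P1
  simp only [ContinuousMap.add_apply]
  exact intervalIntegral.integral_add ((g.continuous.comp hq).intervalIntegrable _ _)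
    ((h.continuous.comp hq).intervalIntegrable _ _)

lemma P1_smul (hq : Continuous q1) (c : ℂ) (g : C(K, ℂ)) : P1 q1 (c • g) = c * P1 q1 g := by
  unfold P1
  simp only [ContinuousMap.smul_apply, smul_eq_mul]
  exact intervalIntegral.integral_const_mul c _

lemma dist_P1_le (hq : Continuous q1) (g h : C(K, ℂ)) :
    dist (P1 q1 g) (P1 q1 h) ≤ dist g h := by
  rw [dist_eq_norm, P1, P1, ← intervalIntegral.integral_sub
    (((by exact g.continuous.comp hq : Continuous fun t => g (q1 t))).intervalIntegrable _ _)
    (((by exact h.continuous.comp hq : Continuous fun t => h (q1 t))).intervalIntegrable _ _)]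
  have := intervalIntegral.norm_integral_le_of_norm_le_const
    (C := dist g h) (f := fun t => g (q1 t) - h (q1 t)) (a := 0) (b := 1) ?_
  · simpa using this
  · intro t _
    rw [← dist_eq_norm]
    exact ContinuousMap.dist_apply_le_dist _

lemma P2_add (hq : Continuous fun p : ℝ × ℝ => q2 p.1 p.2) (g h : C(K, ℂ)) :
    P2 q2 (g + h) = P2 q2 g + P2 q2 h := by
  unfold P2
  rw [← intervalIntegral.integral_add ((contP2_inner hq g).intervalIntegrable _ _)
    ((contP2_inner hq h).intervalIntegrable _ _)]
  apply intervalIntegral.integral_congr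
  intro t _
  exact P1_add (hq.comp (by fun_prop : Continuous fun v : ℝ => ((t, v) : ℝ × ℝ))) g h

lemma P2_smul (hq : Continuous fun p : ℝ × ℝ => q2 p.1 p.2) (c : ℂ) (g : C(K, ℂ)) :
    P2 q2 (c • g) = c * P2 q2 g := by
  unfold P2
  rw [← intervalIntegral.integral_const_mul]
  apply intervalIntegral.integral_congr
  intro t _
  exact P1_smul (hq.comp (by fun_prop : Continuous fun v : ℝ => ((t, v) : ℝ × ℝ))) c g

lemma dist_P2_le (hq : Continuous fun p : ℝ × ℝ => q2 p.1 p.2) (g h : C(K, ℂ)) :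
    dist (P2 q2 g) (P2 q2 h) ≤ dist g h := by
  rw [dist_eq_norm, P2, P2, ← intervalIntegral.integral_sub
    ((contP2_inner hq g).intervalIntegrable _ _) ((contP2_inner hq h).intervalIntegrable _ _)]
  have := intervalIntegral.norm_integral_le_of_norm_le_const (C := dist g h)
    (f := fun t => (∫ v in (0:ℝ)..1, g (q2 t v)) - ∫ v in (0:ℝ)..1, h (q2 t v))
    (a := 0) (b := 1) ?_
  · simpa using this
  · intro t _
    rw [← dist_eq_norm]
    exact dist_P1_le (hq.comp (by fun_prop : Continuous fun v : ℝ => ((t, v) : ℝ × ℝ))) g h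

lemma P3_add (hq : Continuous fun p : ℝ × ℝ × ℝ => q3 p.1 p.2.1 p.2.2) (g h : C(K, ℂ)) :
    P3 q3 (g + h) = P3 q3 g + P3 q3 h := by
  unfold P3
  rw [← intervalIntegral.integral_add ((contP3_inner2 hq g).intervalIntegrable _ _)
    ((contP3_inner2 hq h).intervalIntegrable _ _)]
  apply intervalIntegral.integral_congr
  intro t _
  exact P2_add (hq.comp (by fun_prop : Continuous fun p : ℝ × ℝ => ((t, p.1, p.2) : ℝ × ℝ × ℝ)))
    g h

lemma P3_smul (hq : Continuous fun p : ℝ × ℝ × ℝ => q3 p.1 p.2.1 p.2.2) (c : ℂ) (g : C(K, ℂ)) :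
    P3 q3 (c • g) = c * P3 q3 g := by
  unfold P3
  rw [← intervalIntegral.integral_const_mul]
  apply intervalIntegral.integral_congr
  intro t _
  exact P2_smul (hq.comp (by fun_prop : Continuous fun p : ℝ × ℝ => ((t, p.1, p.2) : ℝ × ℝ × ℝ)))
    c g

lemma dist_P3_le (hq : Continuous fun p : ℝ × ℝ × ℝ => q3 p.1 p.2.1 p.2.2) (g h : C(K, ℂ)) :
    dist (P3 q3 g) (P3 q3 h) ≤ dist g h := by
  rw [dist_eq_norm, P3, P3, ← intervalIntegral.integral_sub
    ((contP3_inner2 hq g).intervalIntegrable _ _) ((contP3_inner2 hq h).intervalIntegrable _ _)]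
  have := intervalIntegral.norm_integral_le_of_norm_le_const (C := dist g h)
    (f := fun t => (∫ u in (0:ℝ)..1, ∫ v in (0:ℝ)..1, g (q3 t u v)) -
      ∫ u in (0:ℝ)..1, ∫ v in (0:ℝ)..1, h (q3 t u v)) (a := 0) (b := 1) ?_
  · simpa using this
  · intro t _
    rw [← dist_eq_norm]
    exact dist_P2_le
      (hq.comp (by fun_prop : Continuous fun p : ℝ × ℝ => ((t, p.1, p.2) : ℝ × ℝ × ℝ))) g h

end functionals

end BL

namespace BL

lemma integral_char (m : ℤ) :
    (∫ t in (0:ℝ)..1, Complex.exp (2 * π * Complex.I * (m * t))) =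
      if m = 0 then 1 else 0 := by
  by_cases hm : m = 0
  · simp [hm]
  · have hc : (2 * π * Complex.I * m : ℂ) ≠ 0 :=
      mul_ne_zero (mul_ne_zero (mul_ne_zero two_ne_zero
        (Complex.ofReal_ne_zero.mpr Real.pi_ne_zero)) Complex.I_ne_zero)
        (Int.cast_ne_zero.mpr hm)
    simp_rw [← mul_assoc]
    rw [integral_exp_mul_complex hc]
    simp only [hm, if_false, Complex.ofReal_one, mul_one, Complex.ofReal_zero, mul_zero,
      Complex.exp_zero]
    rw [show (2 * (π:ℂ) * Complex.I * m) = m * (2 * π * Complex.I) by ring,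
      Complex.exp_int_mul_two_pi_mul_I]
    simp

lemma chi_mk3 (m : ℤ × ℤ × ℤ) (t u v : ℝ) :
    chi m (mk3 t u v) =
      Complex.exp (2 * π * Complex.I * (m.1 * t + m.2.1 * u + m.2.2 * v)) := by
  show e t ^ m.1 * e u ^ m.2.1 * e v ^ m.2.2 = _
  unfold e
  rw [← Complex.exp_int_mul, ← Complex.exp_int_mul, ← Complex.exp_int_mul,
    ← Complex.exp_add, ← Complex.exp_add]
  congr 1
  push_cast
  ring

def path1 (n₂ n₃ : ℕ) : ℝ → K := fun t => mk3 t (n₂ * t) (n₃ * t)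
def path2 (n₂ : ℕ) : ℝ → ℝ → K := fun t v => mk3 t (n₂ * t) v
def path3 : ℝ → ℝ → ℝ → K := mk3

lemma cont_path1 (n₂ n₃ : ℕ) : Continuous (path1 n₂ n₃) :=
  cont_mk3 continuous_id (by fun_prop) (by fun_prop)

lemma cont_path2 (n₂ : ℕ) : Continuous fun p : ℝ × ℝ => path2 n₂ p.1 p.2 :=
  cont_mk3 continuous_fst (by fun_prop) continuous_snd

lemma cont_path3 : Continuous fun p : ℝ × ℝ × ℝ => path3 p.1 p.2.1 p.2.2 :=
  cont_mk3 continuous_fst (by fun_prop) (by fun_prop)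

lemma T1_chi (n₂ n₃ : ℕ) (m : ℤ × ℤ × ℤ) :
    P1 (path1 n₂ n₃) (chi m) =
      if (m.1 + m.2.1 * n₂ + m.2.2 * n₃ : ℤ) = 0 then 1 else 0 := by
  rw [← integral_char]
  unfold P1 path1
  apply intervalIntegral.integral_congr
  intro t _
  simp only [chi_mk3]
  congr 1
  push_cast
  ring

lemma T2_chi (n₂ : ℕ) (m : ℤ × ℤ × ℤ) :
    P2 (path2 n₂) (chi m) =
      (if (m.1 + m.2.1 * n₂ : ℤ) = 0 then 1 else 0) *
        (if m.2.2 = 0 then 1 else 0) := by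
  unfold P2 path2
  have inner : ∀ t : ℝ, (∫ v in (0:ℝ)..1, chi m (mk3 t (n₂ * t) v)) =
      Complex.exp (2 * π * Complex.I * (((m.1 + m.2.1 * n₂ : ℤ) : ℂ) * t)) *
        (if m.2.2 = 0 then 1 else 0) := by
    intro t
    rw [← integral_char m.2.2, ← intervalIntegral.integral_const_mul]
    apply intervalIntegral.integral_congr
    intro v _
    simp only [chi_mk3, ← Complex.exp_add]
    congr 1
    push_cast
    ring
  rw [intervalIntegral.integral_congr (g := fun t : ℝ =>
    Complex.exp (2 * π * Complex.I * (((m.1 + m.2.1 * n₂ : ℤ) : ℂ) * t)) *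
      (if m.2.2 = 0 then 1 else 0)) (fun t _ => inner t)]
  rw [intervalIntegral.integral_mul_const, integral_char]

lemma T3_chi (m : ℤ × ℤ × ℤ) :
    P3 path3 (chi m) =
      (if m.1 = 0 then 1 else 0) * ((if m.2.1 = 0 then 1 else 0) *
        (if m.2.2 = 0 then 1 else 0)) := by
  unfold P3 path3
  have inner2 : ∀ t u : ℝ, (∫ v in (0:ℝ)..1, chi m (mk3 t u v)) =
      Complex.exp (2 * π * Complex.I * ((m.1 : ℂ) * t)) *
        Complex.exp (2 * π * Complex.I * ((m.2.1 : ℂ) * u)) *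
        (if m.2.2 = 0 then 1 else 0) := by
    intro t u
    rw [← integral_char m.2.2, ← intervalIntegral.integral_const_mul]
    apply intervalIntegral.integral_congr
    intro v _
    simp only [chi_mk3, ← Complex.exp_add]
    congr 1
    push_cast
    ring
  have inner1 : ∀ t : ℝ, (∫ u in (0:ℝ)..1, ∫ v in (0:ℝ)..1, chi m (mk3 t u v)) =
      Complex.exp (2 * π * Complex.I * ((m.1 : ℂ) * t)) *
        ((if m.2.1 = 0 then 1 else 0) * (if m.2.2 = 0 then 1 else 0)) := by
    intro t
    rw [intervalIntegral.integral_congr (g := fun u : ℝ =>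
      Complex.exp (2 * π * Complex.I * ((m.1 : ℂ) * t)) *
        Complex.exp (2 * π * Complex.I * ((m.2.1 : ℂ) * u)) *
        (if m.2.2 = 0 then 1 else 0)) (fun u _ => inner2 t u)]
    rw [intervalIntegral.integral_mul_const, intervalIntegral.integral_const_mul, integral_char]
    ring
  rw [intervalIntegral.integral_congr (g := fun t : ℝ =>
    Complex.exp (2 * π * Complex.I * ((m.1 : ℂ) * t)) *
      ((if m.2.1 = 0 then 1 else 0) * (if m.2.2 = 0 then 1 else 0)))
    (fun t _ => inner1 t)]
  rw [intervalIntegral.integral_mul_const, integral_char]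

end BL

namespace BL

lemma key_arith (a c : ℤ) (hc : c ≠ 0) (n : ℕ) (hn : a.natAbs + 1 ≤ n) : a + c * n ≠ 0 := by
  intro h
  have h1 : c * n = -a := by linarith
  have h2 : (c * (n : ℤ)).natAbs = a.natAbs := by rw [h1, Int.natAbs_neg]
  rw [Int.natAbs_mul, Int.natAbs_natCast] at h2
  have h3 : 0 < c.natAbs := Int.natAbs_pos.mpr hc
  have h4 : n ≤ c.natAbs * n := Nat.le_mul_of_pos_left n h3
  omega

lemma tendsto_inner_chi (n₂ : ℕ) (m : ℤ × ℤ × ℤ) :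
    Tendsto (fun n₃ : ℕ => P1 (path1 n₂ n₃) (chi m)) atTop
      (nhds (P2 (path2 n₂) (chi m))) := by
  simp only [T1_chi, T2_chi]
  by_cases hc : m.2.2 = 0
  · simp only [hc, zero_mul, add_zero, if_true, mul_one]
    exact tendsto_const_nhds
  · simp only [hc, if_false, mul_zero]
    apply Tendsto.congr' _ tendsto_const_nhds
    filter_upwards [eventually_ge_atTop ((m.1 + m.2.1 * n₂).natAbs + 1)] with n₃ hn
    rw [eq_comm, if_neg (key_arith _ _ hc _ hn)]

lemma tendsto_outer_chi (m : ℤ × ℤ × ℤ) :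
    Tendsto (fun n₂ : ℕ => P2 (path2 n₂) (chi m)) atTop (nhds (P3 path3 (chi m))) := by
  simp only [T2_chi, T3_chi]
  by_cases hb : m.2.1 = 0
  · simp only [hb, zero_mul, add_zero, if_true, one_mul]
    exact tendsto_const_nhds
  · simp only [hb, if_false, zero_mul, mul_zero, zero_mul]
    apply Tendsto.congr' _ tendsto_const_nhds
    filter_upwards [eventually_ge_atTop (m.1.natAbs + 1)] with n₂ hn
    rw [eq_comm, if_neg (key_arith _ _ hb _ hn), zero_mul]

lemma T1_add (n₂ n₃ : ℕ) (g h : C(K, ℂ)) :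
    P1 (path1 n₂ n₃) (g + h) = P1 (path1 n₂ n₃) g + P1 (path1 n₂ n₃) h :=
  P1_add (cont_path1 n₂ n₃) g h

lemma T1_smul (n₂ n₃ : ℕ) (c : ℂ) (g : C(K, ℂ)) :
    P1 (path1 n₂ n₃) (c • g) = c * P1 (path1 n₂ n₃) g :=
  P1_smul (cont_path1 n₂ n₃) c g

lemma T2_add (n₂ : ℕ) (g h : C(K, ℂ)) :
    P2 (path2 n₂) (g + h) = P2 (path2 n₂) g + P2 (path2 n₂) h :=
  P2_add (cont_path2 n₂) g h

lemma T2_smul (n₂ : ℕ) (c : ℂ) (g : C(K, ℂ)) :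
    P2 (path2 n₂) (c • g) = c * P2 (path2 n₂) g :=
  P2_smul (cont_path2 n₂) c g

lemma T3_add (g h : C(K, ℂ)) : P3 path3 (g + h) = P3 path3 g + P3 path3 h :=
  P3_add cont_path3 g h

lemma T3_smul (c : ℂ) (g : C(K, ℂ)) : P3 path3 (c • g) = c * P3 path3 g :=
  P3_smul cont_path3 c g

lemma P1_zero (q : ℝ → K) : P1 q 0 = 0 := by simp [P1]

lemma P2_zero (q : ℝ → ℝ → K) : P2 q 0 = 0 := by simp [P2]

lemma P3_zero (q : ℝ → ℝ → ℝ → K) : P3 q 0 = 0 := by simp [P3]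

lemma prop_inner (n₂ : ℕ) : ∀ g ∈ V, Tendsto (fun n₃ : ℕ => P1 (path1 n₂ n₃) g) atTop
    (nhds (P2 (path2 n₂) g)) := by
  intro g hg
  induction hg using Submodule.span_induction with
  | mem x hx =>
    obtain ⟨m, rfl⟩ := hx
    exact tendsto_inner_chi n₂ m
  | zero => simp only [P1_zero, P2_zero]; exact tendsto_const_nhds
  | add x y hx hy ihx ihy => simp only [T1_add, T2_add]; exact ihx.add ihy
  | smul c x hx ih => simp only [T1_smul, T2_smul]; exact ih.const_mul c

lemma prop_outer : ∀ g ∈ V, Tendsto (fun n₂ : ℕ => P2 (path2 n₂) g) atTop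
    (nhds (P3 path3 g)) := by
  intro g hg
  induction hg using Submodule.span_induction with
  | mem x hx =>
    obtain ⟨m, rfl⟩ := hx
    exact tendsto_outer_chi m
  | zero => simp only [P2_zero, P3_zero]; exact tendsto_const_nhds
  | add x y hx hy ihx ihy => simp only [T2_add, T3_add]; exact ihx.add ihy
  | smul c x hx ih => simp only [T2_smul, T3_smul]; exact ih.const_mul c

lemma tendsto_of_dense {T : ℕ → C(K, ℂ) → ℂ} {S : C(K, ℂ) → ℂ}
    (hT : ∀ n g h, dist (T n g) (T n h) ≤ dist g h)
    (hS : ∀ g h, dist (S g) (S h) ≤ dist g h)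
    (hlim : ∀ g ∈ V, Tendsto (fun n => T n g) atTop (nhds (S g)))
    (F : C(K, ℂ)) : Tendsto (fun n => T n F) atTop (nhds (S F)) := by
  rw [Metric.tendsto_atTop]
  intro ε hε
  obtain ⟨g, hgV, hgF⟩ := Metric.mem_closure_iff.mp (V_dense F) (ε/3) (by linarith)
  obtain ⟨N, hN⟩ := Metric.tendsto_atTop.mp (hlim g hgV) (ε/3) (by linarith)
  refine ⟨N, fun n hn => ?_⟩
  have h1 : dist (T n F) (T n g) ≤ dist F g := hT n F g
  have h2 : dist (T n g) (S g) < ε/3 := hN n hn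
  have h3 : dist (S g) (S F) ≤ dist g F := hS g F
  have h4 : dist g F = dist F g := dist_comm g F
  have h5 := dist_triangle4 (T n F) (T n g) (S g) (S F)
  linarith

end BL

namespace BL

lemma e_nat_mul (n : ℕ) (t : ℝ) :
    e ((n : ℝ) * t) = Complex.exp (2 * π * Complex.I * ((n : ℂ) * t)) := by
  unfold e
  congr 1
  push_cast
  ring

end BL

end

open BL in
theorem boyd_lawton_lemma_three_vars
    (f : ℂ × ℂ × ℂ → ℂ)
    (hf : ContinuousOn f
      {p : ℂ × ℂ × ℂ | ‖p.1‖ = 1 ∧ ‖p.2.1‖ = 1 ∧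
        ‖p.2.2‖ = 1}) :
    ∃ L : ℕ → ℂ,
      (∀ n₂ : ℕ, 1 ≤ n₂ →
        Tendsto
          (fun n₃ : ℕ => ∫ t in (0:ℝ)..1,
            f (Complex.exp (2 * π * Complex.I * t),
               Complex.exp (2 * π * Complex.I * (n₂ * t)),
               Complex.exp (2 * π * Complex.I * (n₃ * t))))
          atTop (nhds (L n₂))) ∧
      Tendsto L atTop
        (nhds (∫ t₁ in (0:ℝ)..1, ∫ t₂ in (0:ℝ)..1, ∫ t₃ in (0:ℝ)..1,
          f (Complex.exp (2 * π * Complex.I * t₁),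
             Complex.exp (2 * π * Complex.I * t₂),
             Complex.exp (2 * π * Complex.I * t₃)))) := by
  have hfK : ContinuousOn f K := hf
  set F : C(K, ℂ) := ⟨K.restrict f, hfK.restrict⟩ with hF
  refine ⟨fun n₂ => P2 (path2 n₂) F, ?_, ?_⟩
  · intro n₂ _
    have h := tendsto_of_dense (T := fun n₃ g => P1 (path1 n₂ n₃) g)
      (S := fun g => P2 (path2 n₂) g)
      (fun n g h => dist_P1_le (cont_path1 n₂ n) g h)
      (fun g h => dist_P2_le (cont_path2 n₂) g h)
      (prop_inner n₂) F
    apply h.congr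
    intro n₃
    unfold P1 path1
    apply intervalIntegral.integral_congr
    intro t _
    show f (e t, e ((n₂ : ℝ) * t), e ((n₃ : ℝ) * t)) = _
    rw [e_nat_mul, e_nat_mul]
    rfl
  · have h := tendsto_of_dense (T := fun n₂ g => P2 (path2 n₂) g) (S := fun g => P3 path3 g)
      (fun n g h => dist_P2_le (cont_path2 n) g h)
      (fun g h => dist_P3_le cont_path3 g h)
      prop_outer F
    convert h using 2
    rfl
end

section
/- The iterated triple integral ∫_0^1 ∫_0^1 ∫_0^1 e^{2πit}/(e^{2πit} + e^{2πis} + e^{2πiu} + 1) dt ds du equals 1/4. In the notation of the paper, c(1 + x + y + z) = 1/4. -/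
open Real Complex MeasureTheory intervalIntegral

lemma circ_eq (a : ℂ) : (∮ z in C(0,1), (z - (-a))⁻¹)
    = Complex.I * ∫ θ in (0:ℝ)..(2*π), Complex.exp (θ*Complex.I)/(Complex.exp (θ*Complex.I)+a) := by
  rw [circleIntegral, ← intervalIntegral.integral_const_mul]
  congr 1 with θ
  simp [deriv_circleMap, circleMap, sub_neg_eq_add, div_eq_mul_inv, smul_eq_mul]
  ring

lemma inner_int (a : ℂ) (ha : ‖a‖ ≠ 1) :
    (∫ t in (0:ℝ)..1, Complex.exp (2 * π * Complex.I * t) /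
        (Complex.exp (2 * π * Complex.I * t) + a))
      = if ‖a‖ < 1 then 1 else 0 := by
  have hg : ∀ t : ℝ, Complex.exp (2 * π * Complex.I * t) /
        (Complex.exp (2 * π * Complex.I * t) + a)
      = (fun θ : ℝ => Complex.exp (θ*Complex.I)/(Complex.exp (θ*Complex.I)+a)) (2*π*t) := by
    intro t
    have : ((2*π*t : ℝ) : ℂ) * Complex.I = 2 * (π:ℂ) * Complex.I * t := by push_cast; ring
    simp only [this]
  have h2π : (2*π : ℝ) ≠ 0 := by positivity
  have hT : (∫ t in (0:ℝ)..1, Complex.exp (2 * π * Complex.I * t) /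
        (Complex.exp (2 * π * Complex.I * t) + a))
      = (2*π)⁻¹ • ∫ θ in (0:ℝ)..(2*π), Complex.exp (θ*Complex.I)/(Complex.exp (θ*Complex.I)+a) := by
    simp only [hg]
    have h1 := intervalIntegral.integral_comp_mul_left (a := 0) (b := 1)
      (fun θ : ℝ => Complex.exp (θ*Complex.I)/(Complex.exp (θ*Complex.I)+a)) h2π
    simp only [mul_zero, mul_one] at h1
    exact h1
  have hπC : (2*(π:ℂ)) ≠ 0 := by exact_mod_cast h2π
  by_cases h : ‖a‖ < 1
  · rw [if_pos h, hT]
    have hmem : -a ∈ Metric.ball (0:ℂ) 1 :=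
      mem_ball_zero_iff.mpr (by rwa [norm_neg])
    have hoint := circleIntegral.integral_sub_inv_of_mem_ball hmem
    rw [circ_eq] at hoint
    have hJ : (∫ θ in (0:ℝ)..(2*π), Complex.exp (θ*Complex.I)/(Complex.exp (θ*Complex.I)+a))
        = 2*π := by
      have := mul_left_cancel₀ Complex.I_ne_zero
        (hoint.trans (by ring : (2*π*Complex.I:ℂ) = Complex.I * (2*π)))
      simpa using this
    rw [hJ, Complex.real_smul]
    push_cast
    field_simp
  · rw [if_neg h, hT]
    have hgt : 1 < ‖a‖ := lt_of_le_of_ne (not_lt.mp h) (Ne.symm ha)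
    have hzero : (∮ z in C(0,1), (z - (-a))⁻¹) = 0 := by
      have key : (∮ z in C(0,1), (fun z => (z + a)⁻¹) z) = 0 := by
        apply Complex.circleIntegral_eq_zero_of_differentiable_on_off_countable zero_le_one
          Set.countable_empty
        · apply ContinuousOn.inv₀ (continuous_id.add continuous_const).continuousOn
          intro z hz h0
          have hz' : ‖z‖ ≤ 1 := by simpa using mem_closedBall_zero_iff.mp hz
          have hza : z = -a := eq_neg_of_add_eq_zero_left (by simpa using h0)
          rw [hza, norm_neg] at hz'
          exact absurd hz' (not_le.mpr hgt)
        · intro z hz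
          apply DifferentiableAt.inv (differentiableAt_id.add_const a)
          intro h0
          have hz' : ‖z‖ < 1 := mem_ball_zero_iff.mp hz.1
          have hza : z = -a := eq_neg_of_add_eq_zero_left (by simpa using h0)
          rw [hza, norm_neg] at hz'
          exact absurd hz'.le (not_le.mpr hgt)
      simpa [sub_neg_eq_add] using key
    rw [circ_eq] at hzero
    have hJ : (∫ θ in (0:ℝ)..(2*π), Complex.exp (θ*Complex.I)/(Complex.exp (θ*Complex.I)+a)) = 0 := by
      have := mul_left_cancel₀ Complex.I_ne_zero (hzero.trans (by ring : (0:ℂ) = Complex.I * 0))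
      simpa using this
    rw [hJ, smul_zero]

lemma cospi_pos {x : ℝ} (h1 : -(1/2) < x) (h2 : x < 1/2) : 0 < Real.cos (π*x) :=
  Real.cos_pos_of_mem_Ioo ⟨by nlinarith [pi_pos], by nlinarith [pi_pos]⟩

lemma cospi_neg {x : ℝ} (h1 : 1/2 < x) (h2 : x < 3/2) : Real.cos (π*x) < 0 :=
  Real.cos_neg_of_pi_div_two_lt_of_lt (by nlinarith [pi_pos]) (by nlinarith [pi_pos])

lemma cospi_neg' {x : ℝ} (h1 : -(3/2) < x) (h2 : x < -(1/2)) : Real.cos (π*x) < 0 := by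
  have := cospi_neg (x := -x) (by linarith) (by linarith)
  rwa [mul_neg, Real.cos_neg] at this

lemma quad (α β : ℝ) : 1 + Real.cos α + Real.cos β + Real.cos (α - β)
    = 4 * Real.cos (α/2) * Real.cos (β/2) * Real.cos ((α-β)/2) := by
  have h1 : Real.cos (α - β) = 2 * Real.cos ((α-β)/2)^2 - 1 := by
    rw [← Real.cos_two_mul]; congr 1; ring
  have h2 := Real.cos_add_cos α β
  have h3 := Real.cos_add_cos ((α-β)/2) ((α+β)/2)
  rw [show ((α-β)/2+(α+β)/2)/2 = α/2 by ring, show ((α-β)/2-(α+β)/2)/2 = -(β/2) by ring,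
    Real.cos_neg] at h3
  linear_combination h1 + h2 + 2*Real.cos ((α-β)/2) * h3

lemma normsq_eq (s u : ℝ) :
    Complex.normSq (Complex.exp (2 * ↑π * Complex.I * ↑s) +
        (Complex.exp (2 * ↑π * Complex.I * ↑u) + 1))
      = 1 + 8 * (Real.cos (π*s) * Real.cos (π*u) * Real.cos (π*(s-u))) := by
  have hexp : ∀ x : ℝ, Complex.exp (2 * ↑π * Complex.I * ↑x)
      = Complex.ofReal (Real.cos (2*π*x)) + Complex.ofReal (Real.sin (2*π*x)) * Complex.I := by
    intro x
    rw [show (2 * (π:ℂ) * Complex.I * (x:ℂ)) = ((2*π*x : ℝ) : ℂ) * Complex.I by push_cast; ring,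
      Complex.exp_mul_I, Complex.ofReal_cos, Complex.ofReal_sin]
  rw [hexp, hexp]
  have hq := quad (2*π*s) (2*π*u)
  rw [show (2*π*s)/2 = π*s by ring, show (2*π*u)/2 = π*u by ring,
      show (2*π*s - 2*π*u)/2 = π*(s-u) by ring] at hq
  have h1 := Real.sin_sq_add_cos_sq (2*π*s)
  have h2 := Real.sin_sq_add_cos_sq (2*π*u)
  have h3 := Real.cos_sub (2*π*s) (2*π*u)
  simp only [Complex.normSq_apply, Complex.add_re, Complex.add_im, Complex.mul_re, Complex.mul_im,
    Complex.I_re, Complex.I_im, Complex.ofReal_re, Complex.ofReal_im, Complex.one_re,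
    Complex.one_im]
  linear_combination h1 + h2 - 2*h3 + 2*hq

lemma abs_lt_iff (s u : ℝ) :
    ‖(Complex.exp (2 * ↑π * Complex.I * ↑s) +
        (Complex.exp (2 * ↑π * Complex.I * ↑u) + 1))‖ < 1
      ↔ Real.cos (π*s) * Real.cos (π*u) * Real.cos (π*(s-u)) < 0 := by
  rw [← pow_lt_one_iff_of_nonneg (norm_nonneg _) two_ne_zero, Complex.sq_norm, normsq_eq]
  constructor <;> intro h <;> linarith

lemma abs_ne_one (s u : ℝ)
    (h : Real.cos (π*s) * Real.cos (π*u) * Real.cos (π*(s-u)) ≠ 0) :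
    ‖(Complex.exp (2 * ↑π * Complex.I * ↑s) +
        (Complex.exp (2 * ↑π * Complex.I * ↑u) + 1))‖ ≠ 1 := by
  intro h1
  have h2 : Complex.normSq (Complex.exp (2 * ↑π * Complex.I * ↑s) +
      (Complex.exp (2 * ↑π * Complex.I * ↑u) + 1)) = 1 := by
    rw [← Complex.sq_norm, h1]; norm_num
  rw [normsq_eq] at h2
  exact h (by linarith)

lemma cos_zero_countable : ∀ c : ℝ, volume {s : ℝ | Real.cos (π*(s - c)) = 0} = 0 := by
  intro c
  apply Set.Countable.measure_zero
  apply Set.Countable.mono (s₂ := Set.range (fun n : ℤ => ((2*(n:ℝ)+1))/2 + c))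
  · intro s hs
    rw [Set.mem_setOf_eq, Real.cos_eq_zero_iff] at hs
    obtain ⟨n, hn⟩ := hs
    refine ⟨n, ?_⟩
    have : π * ((2*(n:ℝ)+1)/2 + c - c) = π * (s - c) := by rw [hn]; ring
    have := mul_left_cancel₀ Real.pi_ne_zero this
    linarith
  · exact Set.countable_range _

lemma indicator_int (lo hi : ℝ) (h0 : 0 ≤ lo) (hlh : lo ≤ hi) (h1 : hi ≤ 1) :
    (∫ s in (0:ℝ)..1, if s ∈ Set.Ioo lo hi then (1:ℂ) else 0) = ((hi - lo : ℝ) : ℂ) := by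
  rw [intervalIntegral.integral_of_le zero_le_one]
  have : (fun s => if s ∈ Set.Ioo lo hi then (1:ℂ) else 0)
      = Set.indicator (Set.Ioo lo hi) (fun _ => (1:ℂ)) := by
    ext s; simp [Set.indicator_apply]
  rw [this, MeasureTheory.setIntegral_indicator measurableSet_Ioo]
  have hsub : Set.Ioc (0:ℝ) 1 ∩ Set.Ioo lo hi = Set.Ioo lo hi := by
    apply Set.inter_eq_self_of_subset_right
    intro x hx
    exact ⟨lt_of_le_of_lt h0 hx.1, le_trans (le_of_lt hx.2) h1⟩
  rw [hsub, MeasureTheory.setIntegral_const, Real.volume_real_Ioo_of_le hlh, Complex.real_smul, mul_one]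

lemma middle (u : ℝ) (hu0 : 0 < u) (hu1 : u ≤ 1) (hu2 : u ≠ 1/2) :
    (∫ s in (0:ℝ)..1, ∫ t in (0:ℝ)..1,
        Complex.exp (2 * π * Complex.I * t) /
          (Complex.exp (2 * π * Complex.I * t) +
            (Complex.exp (2 * π * Complex.I * s) +
            (Complex.exp (2 * π * Complex.I * u) + 1))))
      = ((min u (1-u) : ℝ) : ℂ) := by
  have hae1 : ∀ᵐ s : ℝ, Real.cos (π*s) ≠ 0 := by
    have := measure_eq_zero_iff_ae_notMem.mp (cos_zero_countable 0)
    filter_upwards [this] with s hs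
    simpa using hs
  have hae2 : ∀ᵐ s : ℝ, Real.cos (π*(s-u)) ≠ 0 := by
    have := measure_eq_zero_iff_ae_notMem.mp (cos_zero_countable u)
    filter_upwards [this] with s hs
    simpa using hs
  rcases lt_or_gt_of_ne hu2 with hlt | hgt
  · -- u < 1/2
    have hCu : 0 < Real.cos (π*u) := cospi_pos (by linarith) hlt
    have hcong : ∀ᵐ s : ℝ, s ∈ Set.uIoc (0:ℝ) 1 →
        (∫ t in (0:ℝ)..1,
          Complex.exp (2 * π * Complex.I * t) /
            (Complex.exp (2 * π * Complex.I * t) +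
              (Complex.exp (2 * π * Complex.I * s) +
              (Complex.exp (2 * π * Complex.I * u) + 1))))
          = if s ∈ Set.Ioo (1/2:ℝ) (u+1/2) then (1:ℂ) else 0 := by
      filter_upwards [hae1, hae2] with s hA hB hs
      rw [Set.uIoc_of_le zero_le_one, Set.mem_Ioc] at hs
      have hP : Real.cos (π*s) * Real.cos (π*u) * Real.cos (π*(s-u)) ≠ 0 :=
        mul_ne_zero (mul_ne_zero hA (ne_of_gt hCu)) hB
      rw [inner_int _ (abs_ne_one s u hP)]; simp only [abs_lt_iff]
      rcases lt_trichotomy s (1/2:ℝ) with h1 | h1 | h1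
      · have hA' : 0 < Real.cos (π*s) := cospi_pos (by linarith [hs.1]) h1
        have hB' : 0 < Real.cos (π*(s-u)) := cospi_pos (by linarith [hs.1]) (by linarith)
        have hnP : ¬ (Real.cos (π*s) * Real.cos (π*u) * Real.cos (π*(s-u)) < 0) := by
          push_neg; positivity
        have hnm : s ∉ Set.Ioo (1/2:ℝ) (u+1/2) := fun h => absurd h.1 (by linarith)
        rw [if_neg hnP, if_neg hnm]
      · exact absurd (by rw [h1, show π*(1/2:ℝ) = π/2 by ring, Real.cos_pi_div_two]) hA
      · rcases lt_trichotomy s (u+1/2) with h2 | h2 | h2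
        · have hA' : Real.cos (π*s) < 0 := cospi_neg h1 (by linarith [hs.2])
          have hB' : 0 < Real.cos (π*(s-u)) := cospi_pos (by linarith) (by linarith)
          rw [if_pos (mul_neg_of_neg_of_pos (mul_neg_of_neg_of_pos hA' hCu) hB'),
            if_pos ⟨h1, h2⟩]
        · exact absurd (by rw [h2, show π*(u+1/2-u) = π/2 by ring, Real.cos_pi_div_two]) hB
        · have hA' : Real.cos (π*s) < 0 := cospi_neg h1 (by linarith [hs.2])
          have hB' : Real.cos (π*(s-u)) < 0 := cospi_neg (by linarith) (by linarith [hs.2])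
          have hnP : ¬ (Real.cos (π*s) * Real.cos (π*u) * Real.cos (π*(s-u)) < 0) := by
            push_neg
            exact le_of_lt (mul_pos_of_neg_of_neg (mul_neg_of_neg_of_pos hA' hCu) hB')
          have hnm : s ∉ Set.Ioo (1/2:ℝ) (u+1/2) := fun h => absurd h.2 (by linarith)
          rw [if_neg hnP, if_neg hnm]
    rw [intervalIntegral.integral_congr_ae hcong,
      indicator_int _ _ (by norm_num) (by linarith) (by linarith)]
    rw [min_eq_left (by linarith : u ≤ 1-u)]
    push_cast; ring
  · -- u > 1/2
    have hCu : Real.cos (π*u) < 0 := cospi_neg hgt (by linarith)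
    have hcong : ∀ᵐ s : ℝ, s ∈ Set.uIoc (0:ℝ) 1 →
        (∫ t in (0:ℝ)..1,
          Complex.exp (2 * π * Complex.I * t) /
            (Complex.exp (2 * π * Complex.I * t) +
              (Complex.exp (2 * π * Complex.I * s) +
              (Complex.exp (2 * π * Complex.I * u) + 1))))
          = if s ∈ Set.Ioo (u-1/2) (1/2:ℝ) then (1:ℂ) else 0 := by
      filter_upwards [hae1, hae2] with s hA hB hs
      rw [Set.uIoc_of_le zero_le_one, Set.mem_Ioc] at hs
      have hP : Real.cos (π*s) * Real.cos (π*u) * Real.cos (π*(s-u)) ≠ 0 :=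
        mul_ne_zero (mul_ne_zero hA (ne_of_lt hCu)) hB
      rw [inner_int _ (abs_ne_one s u hP)]; simp only [abs_lt_iff]
      rcases lt_trichotomy s (u-1/2) with h1 | h1 | h1
      · have hA' : 0 < Real.cos (π*s) := cospi_pos (by linarith [hs.1]) (by linarith)
        have hB' : Real.cos (π*(s-u)) < 0 := cospi_neg' (by linarith [hs.1]) (by linarith)
        have hnP : ¬ (Real.cos (π*s) * Real.cos (π*u) * Real.cos (π*(s-u)) < 0) := by
          push_neg
          exact le_of_lt (mul_pos_of_neg_of_neg (mul_neg_of_pos_of_neg hA' hCu) hB')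
        have hnm : s ∉ Set.Ioo (u-1/2) (1/2:ℝ) := fun h => absurd h.1 (by linarith)
        rw [if_neg hnP, if_neg hnm]
      · exact absurd (by rw [h1, show π*(u-1/2-u) = -(π/2) by ring, Real.cos_neg,
          Real.cos_pi_div_two]) hB
      · rcases lt_trichotomy s (1/2:ℝ) with h2 | h2 | h2
        · have hA' : 0 < Real.cos (π*s) := cospi_pos (by linarith [hs.1]) h2
          have hB' : 0 < Real.cos (π*(s-u)) := cospi_pos (by linarith) (by linarith)
          rw [if_pos (mul_neg_of_neg_of_pos (mul_neg_of_pos_of_neg hA' hCu) hB'),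
            if_pos ⟨h1, h2⟩]
        · exact absurd (by rw [h2, show π*(1/2:ℝ) = π/2 by ring, Real.cos_pi_div_two]) hA
        · have hA' : Real.cos (π*s) < 0 := cospi_neg h2 (by linarith [hs.2])
          have hB' : 0 < Real.cos (π*(s-u)) := cospi_pos (by linarith) (by linarith [hs.2])
          have hnP : ¬ (Real.cos (π*s) * Real.cos (π*u) * Real.cos (π*(s-u)) < 0) := by
            push_neg
            exact le_of_lt (mul_pos (mul_pos_of_neg_of_neg hA' hCu) hB')
          have hnm : s ∉ Set.Ioo (u-1/2) (1/2:ℝ) := fun h => absurd h.2 (by linarith)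
          rw [if_neg hnP, if_neg hnm]
    rw [intervalIntegral.integral_congr_ae hcong,
      indicator_int _ _ (by linarith) (by linarith) (by norm_num)]
    rw [min_eq_right (by linarith : 1-u ≤ u)]
    push_cast; ring

theorem c_of_one_add_x_add_y_add_z :
    (∫ u in (0:ℝ)..1, ∫ s in (0:ℝ)..1, ∫ t in (0:ℝ)..1,
        Complex.exp (2 * π * Complex.I * t) /
          (Complex.exp (2 * π * Complex.I * t) +
            Complex.exp (2 * π * Complex.I * s) +
            Complex.exp (2 * π * Complex.I * u) + 1))
      = 1 / 4 := by
  simp only [add_assoc]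
  have h12 : ∀ᵐ x : ℝ, x ≠ (1/2:ℝ) := by
    have h0 : volume ({(1/2:ℝ)} : Set ℝ) = 0 := measure_singleton _
    filter_upwards [measure_eq_zero_iff_ae_notMem.mp h0] with x hx
    simpa using hx
  have hcong : ∀ᵐ u : ℝ, u ∈ Set.uIoc (0:ℝ) 1 →
      (∫ s in (0:ℝ)..1, ∫ t in (0:ℝ)..1,
        Complex.exp (2 * π * Complex.I * t) /
          (Complex.exp (2 * π * Complex.I * t) +
            (Complex.exp (2 * π * Complex.I * s) +
            (Complex.exp (2 * π * Complex.I * u) + 1))))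
        = ((min u (1-u) : ℝ) : ℂ) := by
    filter_upwards [h12] with u hu hmem
    rw [Set.uIoc_of_le zero_le_one, Set.mem_Ioc] at hmem
    exact middle u hmem.1 hmem.2 hu
  rw [intervalIntegral.integral_congr_ae hcong, intervalIntegral.integral_ofReal]
  have hval : (∫ u in (0:ℝ)..1, min u (1-u)) = 1/4 := by
    have hi1 : IntervalIntegrable (fun u : ℝ => min u (1-u)) volume 0 (1/2) :=
      (continuous_id.min (continuous_const.sub continuous_id)).intervalIntegrable _ _
    have hi2 : IntervalIntegrable (fun u : ℝ => min u (1-u)) volume (1/2) 1 :=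
      (continuous_id.min (continuous_const.sub continuous_id)).intervalIntegrable _ _
    rw [← intervalIntegral.integral_add_adjacent_intervals hi1 hi2]
    have e1 : (∫ u in (0:ℝ)..(1/2), min u (1-u)) = ∫ u in (0:ℝ)..(1/2), u := by
      apply intervalIntegral.integral_congr
      intro x hx
      rw [Set.uIcc_of_le (by norm_num)] at hx
      exact min_eq_left (by rcases hx with ⟨h1, h2⟩; linarith)
    have e2 : (∫ u in (1/2:ℝ)..1, min u (1-u)) = ∫ u in (1/2:ℝ)..1, (1-u) := by
      apply intervalIntegral.integral_congr
      intro x hx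
      rw [Set.uIcc_of_le (by norm_num)] at hx
      exact min_eq_right (by rcases hx with ⟨h1, h2⟩; linarith)
    rw [e1, e2, integral_id,
      intervalIntegral.integral_sub intervalIntegrable_const
        intervalIntegral.intervalIntegrable_id,
      integral_id, intervalIntegral.integral_const]
    norm_num
  rw [hval]
  norm_num
end
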